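/- Assuming the Higher-order Carlson–Simpson Lemma of dimension 2^n + n - 1 over the unary alphabet {0} for all numbers of colors, the following holds: for every finite triangle-free graph F on n vertices there exists ℓ ∈ ℕ such that for every k > 0 and every coloring χ of the embeddings of F into the universal triangle-free graph 𝔾 (realized on 1-variable words over {0} with the passing-number edge relation) with k colors, there is an embedding f of 𝔾 into itself such that χ takes at most ℓ values on embeddings of F into f(𝔾). -/

import Mathlib

/-- Words over the unary alphabet `{0}` are lists over `Option ℕ`, where `none`
is the letter `0` and `some j` is the variable `x_j`. `w` is an `m`-variable word:
exactly the variables `x_j`, `j < m`, occur, each at least once, with the first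
occurrence of `x_{j+1}` preceded by an occurrence of `x_j`. -/
def IsMVarWord (m : ℕ) (w : List (Option ℕ)) : Prop :=
  (∀ j : ℕ, some j ∈ w → j < m) ∧ (∀ j < m, some j ∈ w) ∧
    (∀ i < w.length, ∀ j : ℕ, w[i]? = some (some (j + 1)) →
      ∃ i' < i, w[i']? = some (some j))

/-- `W : ℕ → Option ℕ` is an ω-variable word over `{0}`, with `fo j` the first
occurrence of the variable `x_j`, first occurrences being in increasing order. -/
def IsOmegaVW (W : ℕ → Option ℕ) (fo : ℕ → ℕ) : Prop :=
  (∀ j, W (fo j) = some j) ∧ (∀ j i, i < fo j → W i ≠ some j) ∧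
    (∀ j, fo j < fo (j + 1))

/-- The substitution `W[u]`: replace each occurrence of `x_j` (`j < |u|`) by `u(j)`
and truncate just before the first occurrence of `x_{|u|}`. -/
def substW (W : ℕ → Option ℕ) (fo : ℕ → ℕ) (u : List (Option ℕ)) :
    List (Option ℕ) :=
  (List.range (fo u.length)).map (fun i =>
    match W i with
    | none => none
    | some j => u.getD j (some j))

/-- The edge condition for `|v| < |w|`: the passing number `w(|v|)` is the
variable `x₀`, and there is no `i < |v|` with `v(i) = w(i) = x₀`. -/
def EdgeLt (v w : List (Option ℕ)) : Prop :=
  v.length < w.length ∧ w.getD v.length none = some 0 ∧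
    ¬ ∃ i < v.length, v.getD i none = some 0 ∧ w.getD i none = some 0

/-- The universal triangle-free graph `𝔾`, realized on the `1`-variable words
over `{0}` with the passing-number edge relation. -/
def HG : SimpleGraph {w : List (Option ℕ) // IsMVarWord 1 w} where
  Adj v w := EdgeLt v.1 w.1 ∨ EdgeLt w.1 v.1
  symm := ⟨fun v w h => Or.symm h⟩
  loopless := by
    constructor
    intro v h
    rcases h with h | h <;> exact absurd h.1 (lt_irrefl _)

namespace S13

lemma foMono {W fo} (h : IsOmegaVW W fo) : StrictMono fo :=
  strictMono_nat_of_lt_succ h.2.2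

lemma fo_le_of_W {W fo} (h : IsOmegaVW W fo) {i j} (hij : W i = some j) : fo j ≤ i := by
  by_contra hc
  exact h.2.1 j i (lt_of_not_ge hc) hij

lemma substW_length (W fo u) : (substW W fo u).length = fo u.length := by
  simp [substW]

lemma substW_getD (W fo u) {i} (h : i < fo u.length) :
    (substW W fo u).getD i none = (match W i with
      | none => none | some j => u.getD j (some j)) := by
  rw [List.getD_eq_getElem _ _ (by simpa [substW_length] using h)]
  simp only [substW, List.getElem_map, List.getElem_range]

/-- variables occurring in `substW W fo u` before `fo u.length` come from
positions `j < u.length` -/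
lemma substW_var_lt {W fo} (h : IsOmegaVW W fo) {u : List (Option ℕ)} {i j}
    (hi : i < fo u.length) (hij : W i = some j) : j < u.length :=
  (foMono h).lt_iff_lt.mp (lt_of_le_of_lt (fo_le_of_W h hij) hi)


lemma substW_getElem (W fo u) {i : ℕ} (h : i < (substW W fo u).length) :
    (substW W fo u)[i] = (match W i with
      | none => none | some j => u.getD j (some j)) := by
  simp only [substW, List.getElem_map, List.getElem_range]

lemma substW_getD_none (W fo u) {i : ℕ} (h : i < fo u.length) (hWi : W i = none) :
    (substW W fo u).getD i none = none := by
  rw [substW_getD W fo u h, hWi]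

lemma substW_getD_some (W fo u) {i j : ℕ} (h : i < fo u.length) (hWi : W i = some j) :
    (substW W fo u).getD i none = u.getD j (some j) := by
  rw [substW_getD W fo u h, hWi]

lemma oneVar_entry {v : List (Option ℕ)} (hv : IsMVarWord 1 v) {a : Option ℕ}
    (ha : a ∈ v) : a = none ∨ a = some 0 := by
  cases a with
  | none => exact Or.inl rfl
  | some j =>
      right
      have hj := hv.1 j ha
      have : j = 0 := by omega
      rw [this]

lemma substW_oneVar {W fo} (hW : IsOmegaVW W fo) {v : List (Option ℕ)}
    (hv : IsMVarWord 1 v) : IsMVarWord 1 (substW W fo v) := by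
  have hvar : ∀ j : ℕ, some j ∈ substW W fo v → j < 1 := by
    intro j hj
    rw [List.mem_iff_getElem] at hj
    obtain ⟨i, hi, hei⟩ := hj
    rw [substW_getElem W fo v hi] at hei
    rcases hWi : W i with _ | j'
    · rw [hWi] at hei; exact absurd hei (by simp)
    · rw [hWi] at hei
      simp only at hei
      have hj' : j' < v.length := substW_var_lt hW (by simpa [substW_length] using hi) hWi
      rw [List.getD_eq_getElem _ _ hj'] at hei
      exact hv.1 j (hei ▸ List.getElem_mem hj')
  refine ⟨hvar, ?_, ?_⟩
  · intro j hj
    interval_cases j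
    obtain ⟨j0, hj0len, hj0⟩ := List.mem_iff_getElem.mp (hv.2.1 0 (by norm_num))
    have hlt : fo j0 < fo v.length := foMono hW hj0len
    rw [List.mem_iff_getElem]
    refine ⟨fo j0, by simpa [substW_length] using hlt, ?_⟩
    rw [substW_getElem _ _ _ (by simpa [substW_length] using hlt), hW.1 j0]
    simp only
    rw [List.getD_eq_getElem _ _ hj0len]
    exact hj0
  · intro i hi j hij
    exfalso
    have := hvar (j+1) (List.mem_of_getElem? hij)
    omega

lemma edgeLt_substW_iff {W fo} (hW : IsOmegaVW W fo) (v w : List (Option ℕ)) :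
    EdgeLt (substW W fo v) (substW W fo w) ↔ EdgeLt v w := by
  have hlen := substW_length W fo v
  have hlenw := substW_length W fo w
  constructor
  · rintro ⟨h1, h2, h3⟩
    rw [hlen, hlenw] at h1
    have hvw : v.length < w.length := (foMono hW).lt_iff_lt.mp h1
    refine ⟨hvw, ?_, ?_⟩
    · rw [hlen] at h2
      rw [substW_getD_some W fo w h1 (hW.1 v.length)] at h2
      rwa [List.getD_eq_getElem _ _ hvw, ← List.getD_eq_getElem w none hvw] at h2
    · rintro ⟨i, hilen, hvi, hwi⟩
      apply h3
      refine ⟨fo i, by rw [hlen]; exact foMono hW hilen, ?_, ?_⟩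
      · rw [substW_getD_some W fo v (foMono hW hilen) (hW.1 i),
          List.getD_eq_getElem v _ hilen, ← List.getD_eq_getElem v none hilen]
        exact hvi
      · have hiw : i < w.length := hilen.trans hvw
        rw [substW_getD_some W fo w ((foMono hW hilen).trans h1) (hW.1 i),
          List.getD_eq_getElem w _ hiw, ← List.getD_eq_getElem w none hiw]
        exact hwi
  · rintro ⟨h1, h2, h3⟩
    refine ⟨by rw [hlen, hlenw]; exact foMono hW h1, ?_, ?_⟩
    · rw [hlen, substW_getD_some W fo w (foMono hW h1) (hW.1 v.length),
        List.getD_eq_getElem w _ h1, ← List.getD_eq_getElem w none h1]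
      exact h2
    · rintro ⟨i, hilen, hvi, hwi⟩
      rw [hlen] at hilen
      rcases hWi : W i with _ | j
      · rw [substW_getD_none W fo v hilen hWi] at hvi
        exact absurd hvi (by simp)
      · have hjv : j < v.length := substW_var_lt hW hilen hWi
        have hjw : j < w.length := hjv.trans h1
        rw [substW_getD_some W fo v hilen hWi, List.getD_eq_getElem v _ hjv,
          ← List.getD_eq_getElem v none hjv] at hvi
        rw [substW_getD_some W fo w (hilen.trans (foMono hW h1)) hWi,
          List.getD_eq_getElem w _ hjw, ← List.getD_eq_getElem w none hjw] at hwi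
        exact h3 ⟨j, hjv, hvi, hwi⟩

lemma substW_inj {W fo} (hW : IsOmegaVW W fo) {v w : List (Option ℕ)}
    (h : substW W fo v = substW W fo w) : v = w := by
  have hlen : v.length = w.length := by
    have := congrArg List.length h
    rw [substW_length, substW_length] at this
    exact (foMono hW).injective this
  apply List.ext_getElem hlen
  intro j hjv hjw
  have h1 : fo j < fo v.length := foMono hW hjv
  have h2 : fo j < fo w.length := by rw [← hlen]; exact h1
  have := congrArg (fun l => l.getD (fo j) none) h
  rw [substW_getD_some W fo v h1 (hW.1 j), substW_getD_some W fo w h2 (hW.1 j)] at this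
  rwa [List.getD_eq_getElem v _ hjv, List.getD_eq_getElem w _ hjw] at this

def fEmb (W fo) (hW : IsOmegaVW W fo) : HG ↪g HG where
  toFun := fun v => ⟨substW W fo v.1, substW_oneVar hW v.2⟩
  inj' := by
    intro a b hab
    exact Subtype.ext (substW_inj hW (congrArg Subtype.val hab))
  map_rel_iff' := by
    intro a b
    show EdgeLt (substW W fo a.1) (substW W fo b.1) ∨
        EdgeLt (substW W fo b.1) (substW W fo a.1) ↔ EdgeLt a.1 b.1 ∨ EdgeLt b.1 a.1
    rw [edgeLt_substW_iff hW, edgeLt_substW_iff hW]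

lemma fEmb_val (W fo) (hW : IsOmegaVW W fo) (v : {w : List (Option ℕ) // IsMVarWord 1 w}) :
    ((fEmb W fo hW) v).1 = substW W fo v.1 := rfl

def cutLen (u : List (Option ℕ)) (j : ℕ) : ℕ := u.findIdx (fun a => a == some j)

def substL (u s : List (Option ℕ)) : List (Option ℕ) :=
  (u.take (cutLen u s.length)).map (fun a =>
    match a with | none => none | some j => s.getD j (some j))

lemma cutLen_lt_length {u : List (Option ℕ)} {j : ℕ} (h : some j ∈ u) :
    cutLen u j < u.length :=
  List.findIdx_lt_length_of_exists ⟨some j, h, by simp⟩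

lemma cutLen_getElem {u : List (Option ℕ)} {j : ℕ} (h : cutLen u j < u.length) :
    u[cutLen u j] = some j := by
  unfold cutLen at h ⊢
  have := List.findIdx_getElem (w := h)
  simpa using this

lemma cutLen_min {u : List (Option ℕ)} {j : ℕ} {i : ℕ} (h : i < cutLen u j)
    (hi : i < u.length) : u[i] ≠ some j := by
  have := List.not_of_lt_findIdx (p := fun a => a == some j) (xs := u) (i := i) h
  simpa using this

lemma cutLen_eq {u : List (Option ℕ)} {j p : ℕ} (hp : p < u.length)
    (h2 : u[p] = some j) (h1 : ∀ i (hi : i < u.length), i < p → u[i] ≠ some j) :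
    cutLen u j = p := by
  have hmem : some j ∈ u := h2 ▸ List.getElem_mem hp
  have hlt := cutLen_lt_length hmem
  rcases lt_trichotomy (cutLen u j) p with h | h | h
  · exact absurd (cutLen_getElem hlt) (h1 _ hlt h)
  · exact h
  · exact absurd h2 (cutLen_min h hp)

lemma substL_length (u s : List (Option ℕ)) :
    (substL u s).length = min (cutLen u s.length) u.length := by
  simp [substL]

lemma substL_length_of_mem {u s : List (Option ℕ)} (h : some s.length ∈ u) :
    (substL u s).length = cutLen u s.length := by
  rw [substL_length]
  exact min_eq_left (cutLen_lt_length h).le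

lemma substL_getElem (u s : List (Option ℕ)) {i : ℕ} (h : i < (substL u s).length) :
    (substL u s)[i] = (match u[i]'(by rw [substL_length] at h; omega) with
      | none => none | some j => s.getD j (some j)) := by
  simp only [substL, List.getElem_map, List.getElem_take]

lemma subst_assoc {W fo} (hW : IsOmegaVW W fo) (u s : List (Option ℕ))
    (hs : some s.length ∈ u) :
    substL (substW W fo u) s = substW W fo (substL u s) := by
  set p := cutLen u s.length with hpdef
  have hp : p < u.length := cutLen_lt_length hs
  have hup : u[p] = some s.length := cutLen_getElem hp
  have hlenL : (substL u s).length = p := substL_length_of_mem hs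
  have hfp : fo p < fo u.length := foMono hW hp
  -- Step A : truncation point of the outer substitution
  have hA : cutLen (substW W fo u) s.length = fo p := by
    apply cutLen_eq (by rw [substW_length]; exact hfp)
    · rw [substW_getElem W fo u (by rw [substW_length]; exact hfp)]
      rw [hW.1 p]
      simp only
      rw [List.getD_eq_getElem _ _ hp, hup]
    · intro i hilen hilt
      rw [substW_length] at hilen
      rw [substW_getElem W fo u (by rw [substW_length]; exact hilen)]
      rcases hWi : W i with _ | j
      · simp
      · simp only
        have hj : j < p := (foMono hW).lt_iff_lt.mp
          (lt_of_le_of_lt (fo_le_of_W hW hWi) hilt)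
        rw [List.getD_eq_getElem _ _ (hj.trans hp)]
        exact cutLen_min hj (hj.trans hp)
  -- lengths agree
  have hlen : (substL (substW W fo u) s).length = fo p := by
    rw [substL_length, hA, substW_length]
    exact min_eq_left hfp.le
  have hlenR : (substW W fo (substL u s)).length = fo p := by
    rw [substW_length, hlenL]
  apply List.ext_getElem (by rw [hlen, hlenR])
  intro i h1 h2
  have hifo : i < fo p := by rwa [hlen] at h1
  have hifou : i < fo u.length := hifo.trans hfp
  rw [substL_getElem _ _ h1, substW_getElem _ _ _ h2]
  have hsub : (substW W fo u)[i]'(by rw [substW_length]; exact hifou)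
      = (match W i with | none => none | some j => u.getD j (some j)) :=
    substW_getElem W fo u (by rw [substW_length]; exact hifou)
  rw [hsub]
  rcases hWi : W i with _ | j
  · simp
  · simp only
    have hj : j < p := (foMono hW).lt_iff_lt.mp
      (lt_of_le_of_lt (fo_le_of_W hW hWi) hifo)
    have hju : j < u.length := hj.trans hp
    rw [List.getD_eq_getElem u _ hju,
      List.getD_eq_getElem (substL u s) _ (by rw [hlenL]; exact hj),
      substL_getElem u s (by rw [hlenL]; exact hj)]

namespace Env

variable (n : ℕ) (v : Fin n → List (Option ℕ))

abbrev K (n : ℕ) := Finset (Fin n) ⊕ ℕ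

def Ln : ℕ := Finset.univ.sup (fun t => (v t).length)

def colX (i : ℕ) : Finset (Fin n) :=
  Finset.univ.filter (fun t => i < (v t).length ∧ (v t).getD i none = some 0)

def key (i : ℕ) : Option (K n) :=
  if (∃ t, (v t).length = i) then some (Sum.inr i)
  else if (colX n v i).Nonempty then some (Sum.inl (colX n v i)) else none

noncomputable def fp (κ : K n) : ℕ := sInf {i | key n v i = some κ}

def fps : Finset ℕ :=
  (Finset.range (Ln n v)).filter
    (fun i => (key n v i).isSome ∧ ∀ i' < i, key n v i' ≠ key n v i)

def nv : ℕ := (fps n v).card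

def iso : Fin (nv n v) ≃o {x // x ∈ fps n v} := (fps n v).orderIsoOfFin rfl

noncomputable def idx (κ : K n) : ℕ :=
  if h : fp n v κ ∈ fps n v then ((iso n v).symm ⟨fp n v κ, h⟩ : Fin (nv n v)) else 0

def Occ (κ : K n) : Prop := ∃ i < Ln n v, key n v i = some κ

lemma key_inr {i i' : ℕ} (h : key n v i = some (Sum.inr i')) : i' = i := by
  unfold key at h
  split at h
  · simpa using h.symm
  · split at h
    · simp at h
    · simp at h

lemma key_of_death {i : ℕ} (h : ∃ t, (v t).length = i) :
    key n v i = some (Sum.inr i) := by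
  unfold key; rw [if_pos h]

lemma key_inl {i : ℕ} {X : Finset (Fin n)} (h : key n v i = some (Sum.inl X)) :
    X = colX n v i ∧ X.Nonempty := by
  unfold key at h
  split at h
  · simp at h
  · split at h
    · next hne => simp only [Option.some.injEq, Sum.inl.injEq] at h; exact ⟨h.symm, h ▸ hne⟩
    · simp at h

lemma key_none {i : ℕ} (h : key n v i = none) {t : Fin n}
    (ht : i < (v t).length) : (v t).getD i none ≠ some 0 := by
  intro hc
  unfold key at h
  split at h
  · simp at h
  · split at h
    · simp at h
    · next hne =>
        exact hne ⟨t, Finset.mem_filter.mpr ⟨Finset.mem_univ t, ht, hc⟩⟩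

lemma fp_key {κ : K n} (h : ∃ i, key n v i = some κ) :
    key n v (fp n v κ) = some κ :=
  Nat.sInf_mem (s := {i | key n v i = some κ}) h

lemma fp_le {κ : K n} {i : ℕ} (h : key n v i = some κ) : fp n v κ ≤ i :=
  Nat.sInf_le h

lemma fp_min {κ : K n} (h : ∃ i, key n v i = some κ) {i : ℕ} (hi : i < fp n v κ) :
    key n v i ≠ some κ :=
  Nat.notMem_of_lt_sInf hi

lemma fp_mem_fps {κ : K n} (h : Occ n v κ) : fp n v κ ∈ fps n v := by
  obtain ⟨i, hiL, hik⟩ := h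
  have hex : ∃ i, key n v i = some κ := ⟨i, hik⟩
  refine Finset.mem_filter.mpr ⟨Finset.mem_range.mpr ?_, ?_, ?_⟩
  · exact lt_of_le_of_lt (fp_le n v hik) hiL
  · rw [fp_key n v hex]; rfl
  · intro i' hi'
    rw [fp_key n v hex]
    exact fp_min n v hex hi'

lemma mem_fps_spec {i : ℕ} (h : i ∈ fps n v) :
    i < Ln n v ∧ ∃ κ, key n v i = some κ ∧ fp n v κ = i := by
  obtain ⟨hr, hsome, hmin⟩ := Finset.mem_filter.mp h
  refine ⟨Finset.mem_range.mp hr, ?_⟩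
  obtain ⟨κ, hκ⟩ := Option.isSome_iff_exists.mp hsome
  refine ⟨κ, hκ, ?_⟩
  have hle : fp n v κ ≤ i := fp_le n v hκ
  rcases lt_or_eq_of_le hle with hlt | heq
  · exfalso
    exact hmin _ hlt (by rw [fp_key n v ⟨i, hκ⟩, hκ])
  · exact heq

lemma idx_lt {κ : K n} (h : Occ n v κ) : idx n v κ < nv n v := by
  unfold idx; rw [dif_pos (fp_mem_fps n v h)]
  exact Fin.is_lt _

lemma idx_lt_iff {κ κ' : K n} (hκ : Occ n v κ) (hκ' : Occ n v κ') :
    idx n v κ < idx n v κ' ↔ fp n v κ < fp n v κ' := by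
  unfold idx
  rw [dif_pos (fp_mem_fps n v hκ), dif_pos (fp_mem_fps n v hκ')]
  rw [← Fin.lt_def, OrderIso.lt_iff_lt, Subtype.mk_lt_mk]

lemma idx_inj {κ κ' : K n} (hκ : Occ n v κ) (hκ' : Occ n v κ')
    (h : idx n v κ = idx n v κ') : κ = κ' := by
  have hfp : fp n v κ = fp n v κ' := by
    unfold idx at h
    rw [dif_pos (fp_mem_fps n v hκ), dif_pos (fp_mem_fps n v hκ')] at h
    have h2 : (iso n v).symm ⟨fp n v κ, fp_mem_fps n v hκ⟩
        = (iso n v).symm ⟨fp n v κ', fp_mem_fps n v hκ'⟩ := Fin.ext h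
    have h3 := (iso n v).symm.injective h2
    exact congrArg Subtype.val h3
  have e1 : key n v (fp n v κ) = some κ := fp_key n v ⟨hκ.choose, hκ.choose_spec.2⟩
  have e2 : key n v (fp n v κ') = some κ' := fp_key n v ⟨hκ'.choose, hκ'.choose_spec.2⟩
  rw [hfp, e2] at e1
  exact (Option.some.inj e1).symm

lemma iso_fp {κ : K n} (h : Occ n v κ) :
    ((iso n v ⟨idx n v κ, idx_lt n v h⟩ : {x // x ∈ fps n v}) : ℕ) = fp n v κ := by
  have : (⟨idx n v κ, idx_lt n v h⟩ : Fin (nv n v))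
      = (iso n v).symm ⟨fp n v κ, fp_mem_fps n v h⟩ := by
    apply Fin.ext
    simp only [idx, dif_pos (fp_mem_fps n v h)]
  rw [this]
  rw [OrderIso.apply_symm_apply]

lemma idx_surj {q : ℕ} (hq : q < nv n v) :
    ∃ κ, Occ n v κ ∧ idx n v κ = q ∧
      fp n v κ = ((iso n v ⟨q, hq⟩ : {x // x ∈ fps n v}) : ℕ) := by
  set x := iso n v ⟨q, hq⟩ with hx
  obtain ⟨hiL, κ, hκ, hfp⟩ := mem_fps_spec n v x.2
  refine ⟨κ, ⟨x.1, hiL, hκ⟩, ?_, hfp⟩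
  unfold idx
  rw [dif_pos (by rw [hfp]; exact x.2)]
  have : (⟨fp n v κ, by rw [hfp]; exact x.2⟩ : {y // y ∈ fps n v}) = x :=
    Subtype.ext hfp
  rw [this, hx, OrderIso.symm_apply_apply]

lemma fp_inr {i : ℕ} (hk : key n v i = some (Sum.inr i)) : fp n v (Sum.inr i) = i := by
  refine le_antisymm (fp_le n v hk) ?_
  have h2 := fp_key n v ⟨i, hk⟩
  have := key_inr n v h2
  omega

lemma len_le_Ln (t : Fin n) : (v t).length ≤ Ln n v := by
  unfold Ln
  exact Finset.le_sup (f := fun t => (v t).length) (Finset.mem_univ t)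

lemma exists_len_eq_Ln (hn : 0 < n) : ∃ t, (v t).length = Ln n v := by
  have : (Finset.univ : Finset (Fin n)).Nonempty := ⟨⟨0, hn⟩, Finset.mem_univ _⟩
  obtain ⟨t, _, ht⟩ := Finset.exists_mem_eq_sup Finset.univ this (fun t => (v t).length)
  exact ⟨t, ht.symm⟩

lemma nv_le_Ln : nv n v ≤ Ln n v := by
  have h : fps n v ⊆ Finset.range (Ln n v) := Finset.filter_subset _ _
  have := Finset.card_le_card h
  simpa [nv] using this

lemma nv_card_bound (hn : 0 < n) : nv n v + 2 ≤ 2 ^ n + n := by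
  classical
  set A : Finset (K n) :=
    ((Finset.univ : Finset (Finset (Fin n))).erase ∅).image Sum.inl with hA
  set B : Finset (K n) :=
    ((Finset.univ.image (fun t => (v t).length)).erase (Ln n v)).image Sum.inr with hB
  have hmap : ∀ i ∈ fps n v, (key n v i).getD (Sum.inr 0) ∈ A ∪ B := by
    intro i hi
    obtain ⟨hiL, κ, hκ, -⟩ := mem_fps_spec n v hi
    rw [hκ]
    simp only [Option.getD_some]
    rcases κ with X | i'
    · obtain ⟨hX, hXne⟩ := key_inl n v hκ
      apply Finset.mem_union_left
      rw [hA]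
      apply Finset.mem_image_of_mem
      exact Finset.mem_erase.mpr ⟨Finset.nonempty_iff_ne_empty.mp hXne, Finset.mem_univ _⟩
    · have hii : i' = i := key_inr n v hκ
      subst hii
      -- i' is a death position < Ln
      have hdeath : ∃ t, (v t).length = i' := by
        by_contra hc
        unfold key at hκ
        rw [if_neg hc] at hκ
        split at hκ <;> simp at hκ
      obtain ⟨t, ht⟩ := hdeath
      apply Finset.mem_union_right
      rw [hB]
      apply Finset.mem_image_of_mem
      refine Finset.mem_erase.mpr ⟨?_, ?_⟩
      · omega
      · exact Finset.mem_image.mpr ⟨t, Finset.mem_univ _, ht⟩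
  have hinj : Set.InjOn (fun i => (key n v i).getD (Sum.inr 0)) (fps n v) := by
    intro i hi i' hi' hee
    obtain ⟨-, κ, hκ, hfp⟩ := mem_fps_spec n v hi
    obtain ⟨-, κ', hκ', hfp'⟩ := mem_fps_spec n v hi'
    simp only [hκ, hκ', Option.getD_some] at hee
    rw [← hfp, ← hfp', hee]
  have hcard : nv n v ≤ (A ∪ B).card :=
    Finset.card_le_card_of_injOn _ hmap hinj
  have hAcard : A.card ≤ 2 ^ n - 1 := by
    calc A.card ≤ ((Finset.univ : Finset (Finset (Fin n))).erase ∅).card :=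
          Finset.card_image_le
      _ = 2 ^ n - 1 := by
          rw [Finset.card_erase_of_mem (Finset.mem_univ _)]
          simp [Fintype.card_finset]
  have hBcard : B.card ≤ n - 1 := by
    have hLmem : Ln n v ∈ Finset.univ.image (fun t => (v t).length) := by
      obtain ⟨t, ht⟩ := exists_len_eq_Ln n v hn
      exact Finset.mem_image.mpr ⟨t, Finset.mem_univ _, ht⟩
    calc B.card ≤ ((Finset.univ.image (fun t => (v t).length)).erase (Ln n v)).card :=
          Finset.card_image_le
      _ = (Finset.univ.image (fun t => (v t).length)).card - 1 :=
          Finset.card_erase_of_mem hLmem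
      _ ≤ n - 1 := by
          have h1 : (Finset.univ.image (fun t => (v t).length)).card ≤ n := by
            calc _ ≤ (Finset.univ : Finset (Fin n)).card := Finset.card_image_le
              _ = n := by simp
          omega
  have hAB : (A ∪ B).card ≤ A.card + B.card := Finset.card_union_le A B
  have hpow : 1 ≤ 2 ^ n := Nat.one_le_two_pow
  omega

noncomputable def envU (m : ℕ) : List (Option ℕ) :=
  (List.range (Ln n v)).map (fun i => (key n v i).map (idx n v))
    ++ (List.range (m - nv n v)).map (fun p => some (nv n v + p))

lemma envU_length (m : ℕ) : (envU n v m).length = Ln n v + (m - nv n v) := by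
  simp [envU]

lemma envU_getElem_inner (m : ℕ) {i : ℕ} (hi : i < Ln n v) :
    (envU n v m)[i]'(by rw [envU_length]; omega) = (key n v i).map (idx n v) := by
  unfold envU
  rw [List.getElem_append_left (by simpa using hi)]
  simp

lemma envU_getElem_outer (m : ℕ) {p : ℕ} (hp : p < m - nv n v) :
    (envU n v m)[Ln n v + p]'(by rw [envU_length]; omega) = some (nv n v + p) := by
  unfold envU
  rw [List.getElem_append_right (by simp)]
  simp

noncomputable def posOf (q : ℕ) : ℕ :=
  if h : q < nv n v then ((iso n v ⟨q, h⟩ : {x // x ∈ fps n v}) : ℕ) else 0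

lemma posOf_fp {κ : K n} (h : Occ n v κ) : posOf n v (idx n v κ) = fp n v κ := by
  unfold posOf
  rw [dif_pos (idx_lt n v h)]
  exact iso_fp n v h

noncomputable def jd (t : Fin n) : ℕ :=
  if (v t).length = Ln n v then nv n v else idx n v (Sum.inr (v t).length)

lemma occ_inr {t : Fin n} (hlt : (v t).length < Ln n v) :
    Occ n v (Sum.inr (v t).length) :=
  ⟨(v t).length, hlt, key_of_death n v ⟨t, rfl⟩⟩

lemma jd_le (t : Fin n) : jd n v t ≤ nv n v := by
  unfold jd
  split
  · exact le_rfl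
  · next h =>
      have hlt : (v t).length < Ln n v := lt_of_le_of_ne (len_le_Ln n v t) h
      exact (idx_lt n v (occ_inr n v hlt)).le

noncomputable def envS (t : Fin n) : List (Option ℕ) :=
  (List.range (jd n v t)).map (fun q => (v t).getD (posOf n v q) none)

lemma envS_length (t : Fin n) : (envS n v t).length = jd n v t := by
  simp [envS]

lemma envS_getElem (t : Fin n) {q : ℕ} (hq : q < jd n v t) :
    (envS n v t)[q]'(by rw [envS_length]; omega) = (v t).getD (posOf n v q) none := by
  simp [envS]

lemma envS_entries {t : Fin n} (h1 : IsMVarWord 1 (v t)) {a : Option ℕ}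
    (ha : a ∈ envS n v t) : a = none ∨ a = some 0 := by
  rw [List.mem_iff_getElem] at ha
  obtain ⟨q, hq, hqa⟩ := ha
  rw [envS_length] at hq
  rw [envS_getElem n v t hq] at hqa
  by_cases hp : posOf n v q < (v t).length
  · rw [List.getD_eq_getElem _ _ hp] at hqa
    exact oneVar_entry h1 (hqa ▸ List.getElem_mem hp)
  · left
    rw [← hqa, List.getD_eq_default _ _ (by omega)]

lemma getElem_idx (l : List (Option ℕ)) {i i' : ℕ} (hii : i = i')
    (hi : i < l.length) (hi' : i' < l.length) : l[i] = l[i'] := by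
  subst hii; rfl

lemma colX_mem_iff {i : ℕ} {t : Fin n} :
    t ∈ colX n v i ↔ i < (v t).length ∧ (v t).getD i none = some 0 := by
  unfold colX; simp

lemma key_entry_eq {i i' : ℕ} {κ : K n} (hκ : key n v i = some κ)
    (hκ' : key n v i' = some κ) {t : Fin n} (hi : i < (v t).length)
    (hi' : i' < (v t).length) (h1 : IsMVarWord 1 (v t)) :
    (v t).getD i none = (v t).getD i' none := by
  rcases κ with X | p
  · obtain ⟨hX, -⟩ := key_inl n v hκ
    obtain ⟨hX', -⟩ := key_inl n v hκ'
    have hiff : ((v t).getD i none = some 0) ↔ ((v t).getD i' none = some 0) := by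
      constructor
      · intro h
        have ht : t ∈ colX n v i' := by
          rw [← hX', hX]
          exact (colX_mem_iff n v).mpr ⟨hi, h⟩
        exact ((colX_mem_iff n v).mp ht).2
      · intro h
        have ht : t ∈ colX n v i := by
          rw [← hX, hX']
          exact (colX_mem_iff n v).mpr ⟨hi', h⟩
        exact ((colX_mem_iff n v).mp ht).2
    have e1 := oneVar_entry h1 (a := (v t)[i]) (List.getElem_mem hi)
    have e2 := oneVar_entry h1 (a := (v t)[i']) (List.getElem_mem hi')
    rw [List.getD_eq_getElem _ _ hi, List.getD_eq_getElem _ _ hi'] at hiff ⊢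
    rcases e1 with e1 | e1 <;> rcases e2 with e2 | e2 <;>
      rw [e1, e2] at hiff ⊢ <;>
      first
        | rfl
        | exact hiff.mpr rfl
        | exact (hiff.mp rfl).symm
  · have h1' := key_inr n v hκ
    have h2' := key_inr n v hκ'
    rw [← h1', ← h2']

lemma envU_cutLen (h1 : ∀ t, IsMVarWord 1 (v t)) {m : ℕ} (hm : nv n v < m)
    (t : Fin n) : cutLen (envU n v m) (jd n v t) = (v t).length := by
  have hlt : (v t).length ≤ Ln n v := len_le_Ln n v t
  have hulen : (envU n v m).length = Ln n v + (m - nv n v) := envU_length n v m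
  apply cutLen_eq (by omega)
  · by_cases hc : (v t).length = Ln n v
    · have hout := envU_getElem_outer n v m (p := 0) (by omega)
      unfold jd
      rw [if_pos hc]
      rw [getElem_idx (envU n v m) (show (v t).length = Ln n v + 0 from by omega)
        (by rw [envU_length]; omega) (by rw [envU_length]; omega)]
      simpa using hout
    · have hlt2 : (v t).length < Ln n v := lt_of_le_of_ne hlt hc
      rw [envU_getElem_inner n v m hlt2, key_of_death n v ⟨t, rfl⟩]
      unfold jd
      rw [if_neg hc]
      simp
  · intro i hilen hip
    have hiLn : i < Ln n v := by omega
    rw [envU_getElem_inner n v m hiLn]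
    rcases hk : key n v i with _ | κ
    · simp
    · simp only [Option.map_some, ne_eq, Option.some.injEq]
      intro hcon
      have hocc : Occ n v κ := ⟨i, hiLn, hk⟩
      unfold jd at hcon
      split at hcon
      · exact absurd hcon (ne_of_lt (idx_lt n v hocc))
      · next hcne =>
          have hlt2 : (v t).length < Ln n v := lt_of_le_of_ne hlt hcne
          have heq := idx_inj n v hocc (occ_inr n v hlt2) hcon
          rw [heq] at hk
          have := key_inr n v hk
          omega

lemma envS_subst (h1 : ∀ t, IsMVarWord 1 (v t)) {m : ℕ} (hm : nv n v < m)
    (t : Fin n) : substL (envU n v m) (envS n v t) = v t := by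
  have hcut : cutLen (envU n v m) (envS n v t).length = (v t).length := by
    rw [envS_length]; exact envU_cutLen n v h1 hm t
  have hlt : (v t).length ≤ Ln n v := len_le_Ln n v t
  have hL : (substL (envU n v m) (envS n v t)).length = (v t).length := by
    rw [substL_length, hcut, envU_length]
    omega
  apply List.ext_getElem hL
  intro i hi1 hi2
  rw [substL_getElem _ _ hi1]
  have hiLn : i < Ln n v := lt_of_lt_of_le hi2 hlt
  have hin := envU_getElem_inner n v m hiLn
  rw [hin]
  rcases hk : key n v i with _ | κ
  · simp only [Option.map_none]
    have hne := key_none n v hk (t := t) hi2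
    rcases oneVar_entry (h1 t) (a := (v t)[i]) (List.getElem_mem hi2) with h | h
    · exact h.symm
    · exfalso; apply hne; rw [List.getD_eq_getElem _ _ hi2]; exact h
  · simp only [Option.map_some]
    have hocc : Occ n v κ := ⟨i, hiLn, hk⟩
    have hidx : idx n v κ < jd n v t := by
      unfold jd
      split
      · exact idx_lt n v hocc
      · next hcne =>
          have hlt2 : (v t).length < Ln n v := lt_of_le_of_ne hlt hcne
          rw [idx_lt_iff n v hocc (occ_inr n v hlt2),
            fp_inr n v (key_of_death n v ⟨t, rfl⟩)]
          exact lt_of_le_of_lt (fp_le n v hk) hi2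
    rw [List.getD_eq_getElem _ _ (by rw [envS_length]; exact hidx),
      envS_getElem n v t hidx, posOf_fp n v hocc]
    have hfpi : fp n v κ ≤ i := fp_le n v hk
    have hfk := fp_key n v ⟨i, hk⟩
    have hee := key_entry_eq n v hfk hk (t := t) (by omega) hi2 (h1 t)
    rw [hee, List.getD_eq_getElem _ _ hi2]

lemma envS_len_mem {m : ℕ} (hm : nv n v < m) (t : Fin n) :
    some (envS n v t).length ∈ envU n v m := by
  rw [envS_length]
  by_cases hc : (v t).length = Ln n v
  · unfold jd; rw [if_pos hc]
    rw [List.mem_iff_getElem]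
    exact ⟨Ln n v + 0, by rw [envU_length]; omega,
      by simpa using envU_getElem_outer n v m (p := 0) (by omega)⟩
  · have hlt2 : (v t).length < Ln n v := lt_of_le_of_ne (len_le_Ln n v t) hc
    unfold jd; rw [if_neg hc]
    rw [List.mem_iff_getElem]
    refine ⟨(v t).length, by rw [envU_length]; omega, ?_⟩
    rw [envU_getElem_inner n v m hlt2, key_of_death n v ⟨t, rfl⟩]
    simp

lemma envU_vars {m : ℕ} (hm : nv n v < m) {j : ℕ} (hj : some j ∈ envU n v m) :
    j < m := by
  rw [List.mem_iff_getElem] at hj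
  obtain ⟨i, hi, hie⟩ := hj
  rw [envU_length] at hi
  by_cases hiL : i < Ln n v
  · rw [envU_getElem_inner n v m hiL] at hie
    rcases hk : key n v i with _ | κ
    · rw [hk] at hie; simp at hie
    · rw [hk] at hie
      simp only [Option.map_some, Option.some.injEq] at hie
      have := idx_lt n v (κ := κ) ⟨i, hiL, hk⟩
      omega
  · rw [getElem_idx (envU n v m) (show i = Ln n v + (i - Ln n v) from by omega)
      (by rw [envU_length]; omega) (by rw [envU_length]; omega)] at hie
    rw [envU_getElem_outer n v m (p := i - Ln n v) (by omega)] at hie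
    have := Option.some.inj hie
    omega

lemma envU_vars_mem {m : ℕ} (hm : nv n v < m) {j : ℕ} (hj : j < m) :
    some j ∈ envU n v m := by
  by_cases hjn : j < nv n v
  · obtain ⟨κ, hocc, hidx, -⟩ := idx_surj n v hjn
    obtain ⟨i, hiL, hk⟩ := hocc
    rw [List.mem_iff_getElem]
    refine ⟨i, by rw [envU_length]; omega, ?_⟩
    rw [envU_getElem_inner n v m hiL, hk]
    simp [hidx]
  · rw [List.mem_iff_getElem]
    refine ⟨Ln n v + (j - nv n v), by rw [envU_length]; omega, ?_⟩
    rw [envU_getElem_outer n v m (p := j - nv n v) (by omega)]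
    simp only [Option.some.injEq]
    omega

lemma envU_order {m : ℕ} (hm : nv n v < m) :
    ∀ i < (envU n v m).length, ∀ j : ℕ,
      (envU n v m)[i]? = some (some (j + 1)) →
        ∃ i' < i, (envU n v m)[i']? = some (some j) := by
  intro i hi j hij
  rw [List.getElem?_eq_getElem hi] at hij
  have hie : (envU n v m)[i] = some (j + 1) := Option.some.inj hij
  rw [envU_length] at hi
  by_cases hiL : i < Ln n v
  · rw [envU_getElem_inner n v m hiL] at hie
    rcases hk : key n v i with _ | κ
    · rw [hk] at hie; simp at hie
    · rw [hk] at hie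
      simp only [Option.map_some, Option.some.injEq] at hie
      have hocc : Occ n v κ := ⟨i, hiL, hk⟩
      have hjlt : j + 1 < nv n v := hie ▸ idx_lt n v hocc
      obtain ⟨κ', hocc', hidx', -⟩ := idx_surj n v (q := j) (by omega)
      have hkfp : key n v (fp n v κ') = some κ' :=
        fp_key n v ⟨hocc'.choose, hocc'.choose_spec.2⟩
      have hord : fp n v κ' < fp n v κ := by
        rw [← idx_lt_iff n v hocc' hocc]
        omega
      have hfpi : fp n v κ ≤ i := fp_le n v hk
      have hfpL : fp n v κ' < Ln n v := (mem_fps_spec n v (fp_mem_fps n v hocc')).1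
      refine ⟨fp n v κ', by omega, ?_⟩
      rw [
        List.getElem?_eq_getElem (by rw [envU_length]; omega)]
      rw [envU_getElem_inner n v m hfpL, hkfp]
      simp [hidx']
  · rw [getElem_idx (envU n v m) (show i = Ln n v + (i - Ln n v) from by omega)
      (by rw [envU_length]; omega) (by rw [envU_length]; omega)] at hie
    rw [envU_getElem_outer n v m (p := i - Ln n v) (by omega)] at hie
    have hval : nv n v + (i - Ln n v) = j + 1 := Option.some.inj hie
    by_cases hp0 : i - Ln n v = 0
    · obtain ⟨κ', hocc', hidx', -⟩ := idx_surj n v (q := j) (by omega)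
      obtain ⟨i0, hi0L, hk0⟩ := hocc'
      refine ⟨i0, by omega, ?_⟩
      rw [
        List.getElem?_eq_getElem (by rw [envU_length]; omega)]
      rw [envU_getElem_inner n v m hi0L, hk0]
      simp [hidx']
    · refine ⟨Ln n v + (i - Ln n v - 1), by omega, ?_⟩
      rw [
        List.getElem?_eq_getElem (by rw [envU_length]; omega)]
      rw [envU_getElem_outer n v m (p := i - Ln n v - 1) (by omega)]
      simp only [Option.some.injEq]
      omega

lemma envU_mvar {m : ℕ} (hm : nv n v < m) : IsMVarWord m (envU n v m) :=
  ⟨fun _ h => envU_vars n v hm h, fun _ hj => envU_vars_mem n v hm hj,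
    envU_order n v hm⟩

end Env

def decodeP (m : ℕ) (p : Fin (m+1) × (Fin m → Bool)) : List (Option ℕ) :=
  (List.ofFn (fun q : Fin m => if p.2 q then some 0 else none)).take (p.1 : ℕ)

lemma encode_exists (m : ℕ) (s : List (Option ℕ)) (hlen : s.length ≤ m)
    (hent : ∀ a ∈ s, a = none ∨ a = some 0) :
    ∃ p : Fin (m+1) × (Fin m → Bool), decodeP m p = s := by
  refine ⟨⟨⟨s.length, by omega⟩, fun q => decide (s.getD q none = some 0)⟩, ?_⟩
  unfold decodeP
  apply List.ext_getElem
  · simp only [List.length_take, List.length_ofFn]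
    omega
  · intro i h1 h2
    rw [List.getElem_take, List.getElem_ofFn]
    rcases hent s[i] (List.getElem_mem h2) with h | h
    · simp [List.getD_eq_getElem?_getD, List.getElem?_eq_getElem h2, h]
    · simp [List.getD_eq_getElem?_getD, List.getElem?_eq_getElem h2, h]

end S13

theorem stmt_13 (n : ℕ) (hn : 0 < n)
    (csl : ∀ (k : ℕ) (c : List (Option ℕ) → Fin k),
      ∃ (W : ℕ → Option ℕ) (fo : ℕ → ℕ), IsOmegaVW W fo ∧
        ∃ i : Fin k, ∀ u : List (Option ℕ),
          IsMVarWord (2 ^ n + n - 1) u → c (substW W fo u) = i)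
    (F : SimpleGraph (Fin n)) (hF : F.CliqueFree 3) :
    ∃ ℓ : ℕ, ∀ k : ℕ, 0 < k → ∀ χ : (F ↪g HG) → Fin k,
      ∃ f : HG ↪g HG,
        (χ '' {e : F ↪g HG | Set.range (⇑e) ⊆ Set.range (⇑f)}).ncard ≤ ℓ := by
  classical
  set m := 2 ^ n + n - 1 with hmdef
  refine ⟨Fintype.card (Fin n → Fin (m+1) × (Fin m → Bool)), ?_⟩
  intro k hk χ
  set χ' : (Fin n → Fin (m+1) × (Fin m → Bool)) → List (Option ℕ) → Fin k :=
    fun σ w =>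
      if h : ∃ e : F ↪g HG, ∀ t, (e t).1 = S13.substL w (S13.decodeP m (σ t))
      then χ h.choose else ⟨0, hk⟩ with hχ'
  set eqv := Fintype.equivFin ((Fin n → Fin (m+1) × (Fin m → Bool)) → Fin k)
    with heqv
  obtain ⟨W, fo, hW, i, hmono⟩ :=
    csl (Fintype.card ((Fin n → Fin (m+1) × (Fin m → Bool)) → Fin k))
      (fun w => eqv (fun σ => χ' σ w))
  refine ⟨S13.fEmb W fo hW, ?_⟩
  set g : (Fin n → Fin (m+1) × (Fin m → Bool)) → Fin k := eqv.symm i with hg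
  have hsubset : χ '' {e : F ↪g HG |
      Set.range (⇑e) ⊆ Set.range (⇑(S13.fEmb W fo hW))} ⊆ Set.range g := by
    rintro b ⟨e, he, rfl⟩
    simp only [Set.mem_setOf_eq] at he
    have hch : ∀ t, ∃ x, (S13.fEmb W fo hW) x = e t := fun t => he ⟨t, rfl⟩
    choose v' hv' using hch
    set vv : Fin n → List (Option ℕ) := fun t => (v' t).1 with hvv
    have hv1 : ∀ t, IsMVarWord 1 (vv t) := fun t => (v' t).2
    have hmlt : S13.Env.nv n vv < m := by
      have h2 := S13.Env.nv_card_bound n vv hn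
      have h3 : 1 ≤ 2 ^ n := Nat.one_le_two_pow
      omega
    have hmv : IsMVarWord m (S13.Env.envU n vv m) := S13.Env.envU_mvar n vv hmlt
    have hsub := S13.Env.envS_subst n vv hv1 hmlt
    have hmem := fun t => S13.Env.envS_len_mem n vv hmlt t
    have hσex : ∀ t, ∃ p : Fin (m+1) × (Fin m → Bool),
        S13.decodeP m p = S13.Env.envS n vv t := by
      intro t
      apply S13.encode_exists
      · have h1 := S13.Env.jd_le n vv t
        have h2 := S13.Env.envS_length n vv t
        omega
      · exact fun a ha => S13.Env.envS_entries n vv (hv1 t) ha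
    choose σ hσ using hσex
    have hkey : ∀ t, S13.substL (substW W fo (S13.Env.envU n vv m))
        (S13.decodeP m (σ t)) = (e t).1 := by
      intro t
      rw [hσ t, S13.subst_assoc hW _ _ (hmem t), hsub t]
      exact congrArg Subtype.val (hv' t)
    have hP : ∃ e₀ : F ↪g HG, ∀ t, (e₀ t).1 =
        S13.substL (substW W fo (S13.Env.envU n vv m)) (S13.decodeP m (σ t)) :=
      ⟨e, fun t => (hkey t).symm⟩
    have hchoose : hP.choose = e :=
      RelEmbedding.ext fun t =>
        Subtype.ext ((hP.choose_spec t).trans (hkey t))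
    refine ⟨σ, ?_⟩
    have h1 : χ' σ (substW W fo (S13.Env.envU n vv m)) = χ e := by
      simp only [hχ']
      rw [dif_pos hP, hchoose]
    have hcw := hmono (S13.Env.envU n vv m) hmv
    have h3 := congrArg eqv.symm hcw
    rw [Equiv.symm_apply_apply] at h3
    have h2 : χ' σ (substW W fo (S13.Env.envU n vv m)) = g σ := by
      rw [hg]
      exact congrFun h3 σ
    rw [← h2]
    exact h1
  refine le_trans (Set.ncard_le_ncard hsubset (Set.toFinite _)) ?_
  rw [← Set.image_univ]
  refine le_trans (Set.ncard_image_le Set.finite_univ) ?_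
  rw [Set.ncard_univ, Nat.card_eq_fintype_card]
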